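/- For the ladder graph G = P_k □ P_2 with k ≥ 1, the minimum cardinality of a redundant locating-dominating set is k + 1 if k is odd, and k + 2 if k is even. -/

import Mathlib

open scoped symmDiff

/-- A locating-dominating (LD) set: every non-detector is dominated, and
distinct non-detectors have distinct neighborhood traces on `S`. -/
def IsLDSet {V : Type*} (G : SimpleGraph V) (S : Set V) : Prop :=
  (∀ v ∉ S, (G.neighborSet v ∩ S).Nonempty) ∧
    ∀ u ∉ S, ∀ v ∉ S, u ≠ v → G.neighborSet u ∩ S ≠ G.neighborSet v ∩ S

/-- A redundant locating-dominating (RED:LD) set. -/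
def IsRedLDSet {V : Type*} (G : SimpleGraph V) (S : Set V) : Prop :=
  IsLDSet G S ∧ ∀ v ∈ S, IsLDSet G (S \ {v})

/-- A leaf is a vertex of degree 1. -/
def IsLeaf {V : Type*} (G : SimpleGraph V) (v : V) : Prop :=
  (G.neighborSet v).ncard = 1

/-- A support vertex is a vertex adjacent to a leaf. -/
def IsSupport {V : Type*} (G : SimpleGraph V) (v : V) : Prop :=
  ∃ u, G.Adj v u ∧ IsLeaf G u
section AuxStmt10
open SimpleGraph

abbrev LV (k : ℕ) := Fin k × Fin 2

def Lad (k : ℕ) : SimpleGraph (LV k) := (pathGraph k).boxProd (pathGraph 2)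

lemma lad_adj {k : ℕ} (p q : LV k) : (Lad k).Adj p q ↔
    (((p.2 : ℕ) = q.2) ∧ ((p.1 : ℕ) + 1 = q.1 ∨ (q.1 : ℕ) + 1 = p.1)) ∨
      (((p.1 : ℕ) = q.1) ∧ (p.2 : ℕ) ≠ q.2) := by
  rw [Lad, boxProd_adj, pathGraph_adj, pathGraph_adj]
  omega

lemma mem_codeset {k : ℕ} {T : Set (LV k)} {u x : LV k} :
    x ∈ (Lad k).neighborSet u ∩ T ↔ (Lad k).Adj u x ∧ x ∈ T := Iff.rfl

def SB (k : ℕ) : Set (LV k) := {p | (p.1 : ℕ) % 2 = 0 ∨ (p.1 : ℕ) + 1 = k}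

lemma mem_SB {k : ℕ} {p : LV k} : p ∈ SB k ↔ ((p.1 : ℕ) % 2 = 0 ∨ (p.1 : ℕ) + 1 = k) := Iff.rfl

lemma not_mem_SB {k : ℕ} {p : LV k} : p ∉ SB k ↔ ((p.1 : ℕ) % 2 = 1 ∧ (p.1 : ℕ) + 1 ≠ k) := by
  rw [mem_SB]
    <;> omega

lemma code_eq {k : ℕ} (a b : ℕ) (ha : a < k) (hb : b < 2) (h2 : a % 2 = 1) (h3 : a + 1 < k) :
    (Lad k).neighborSet (⟨a, ha⟩, ⟨b, hb⟩) ∩ SB k =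
      {(⟨a - 1, by omega⟩, ⟨b, hb⟩), (⟨a + 1, h3⟩, ⟨b, hb⟩)} := by
  ext x
  simp only [mem_codeset, lad_adj, mem_SB, Set.mem_insert_iff, Set.mem_singleton_iff,
    Prod.ext_iff, Fin.ext_iff, Fin.val_mk, true_and, and_true, false_and, and_false, true_or, or_true, false_or, or_false, not_true, not_false_iff]
  omega

section Upper
variable {k : ℕ}

lemma mem_code_left (a b : ℕ) (ha : a < k) (hb : b < 2) (h2 : a % 2 = 1) (h3 : a + 1 < k) :
    ((⟨a - 1, by omega⟩ : Fin k), (⟨b, hb⟩ : Fin 2)) ∈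
      (Lad k).neighborSet (⟨a, ha⟩, ⟨b, hb⟩) ∩ SB k := by
  rw [code_eq a b ha hb h2 h3]; exact Set.mem_insert _ _

lemma mem_code_right (a b : ℕ) (ha : a < k) (hb : b < 2) (h2 : a % 2 = 1) (h3 : a + 1 < k) :
    ((⟨a + 1, h3⟩ : Fin k), (⟨b, hb⟩ : Fin 2)) ∈
      (Lad k).neighborSet (⟨a, ha⟩, ⟨b, hb⟩) ∩ SB k := by
  rw [code_eq a b ha hb h2 h3]; exact Set.mem_insert_iff.2 (Or.inr rfl)

lemma SB_partner (c d : ℕ) (hc : c < k) (hd : d < 2) (hv : ((⟨c, hc⟩, ⟨d, hd⟩) : LV k) ∈ SB k) :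
    ((⟨c, hc⟩ : Fin k), (⟨1 - d, by omega⟩ : Fin 2)) ∈
      (Lad k).neighborSet (⟨c, hc⟩, ⟨d, hd⟩) ∩ (SB k \ {(⟨c, hc⟩, ⟨d, hd⟩)}) := by
  refine ⟨?_, ?_, ?_⟩
  · rw [SimpleGraph.mem_neighborSet, lad_adj]; simp only [Fin.val_mk, true_and, and_true, false_and, and_false, true_or, or_true, false_or, or_false, not_true, not_false_iff]
    <;> omega
  · rw [mem_SB] at hv ⊢; simpa using hv
  · simp only [Set.mem_singleton_iff, Prod.ext_iff, Fin.ext_iff, Fin.val_mk, true_and, and_true, false_and, and_false, true_or, or_true, false_or, or_false, not_true, not_false_iff]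
    <;> omega

lemma SB_LD : IsLDSet (Lad k) (SB k) := by
  constructor
  · rintro ⟨⟨a, ha⟩, ⟨b, hb⟩⟩ hu
    rw [not_mem_SB] at hu
    simp only [Fin.val_mk, true_and, and_true, false_and, and_false, true_or, or_true, false_or, or_false, not_true, not_false_iff] at hu
    exact ⟨_, mem_code_left a b ha hb hu.1 (by omega)⟩
  · rintro ⟨⟨a, ha⟩, ⟨b, hb⟩⟩ hu ⟨⟨a', ha'⟩, ⟨b', hb'⟩⟩ hu' hne heq
    rw [not_mem_SB] at hu hu'
    simp only [Fin.val_mk, true_and, and_true, false_and, and_false, true_or, or_true, false_or, or_false, not_true, not_false_iff] at hu hu'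
    rw [code_eq a b ha hb hu.1 (by omega), code_eq a' b' ha' hb' hu'.1 (by omega)] at heq
    have h1 : ((⟨a - 1, by omega⟩ : Fin k), (⟨b, hb⟩ : Fin 2)) ∈
        ({(⟨a' - 1, by omega⟩, ⟨b', hb'⟩), (⟨a' + 1, by omega⟩, ⟨b', hb'⟩)} : Set (LV k)) := by
      rw [← heq]; exact Set.mem_insert _ _
    have h2 : ((⟨a + 1, by omega⟩ : Fin k), (⟨b, hb⟩ : Fin 2)) ∈
        ({(⟨a' - 1, by omega⟩, ⟨b', hb'⟩), (⟨a' + 1, by omega⟩, ⟨b', hb'⟩)} : Set (LV k)) := by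
      rw [← heq]; exact Set.mem_insert_iff.2 (Or.inr rfl)
    simp only [Set.mem_insert_iff, Set.mem_singleton_iff, Prod.ext_iff, Fin.ext_iff,
      Fin.val_mk, true_and, and_true, false_and, and_false, true_or, or_true, false_or, or_false, not_true, not_false_iff] at h1 h2
    simp only [Set.mem_singleton_iff, Ne, Prod.ext_iff, Fin.ext_iff, Fin.val_mk, true_and, and_true, false_and, and_false, true_or, or_true, false_or, or_false, not_true, not_false_iff] at hne
    omega

lemma aux_iii (c d : ℕ) (hc : c < k) (hd : d < 2)
    (a b : ℕ) (ha : a < k) (hb : b < 2) (h2 : a % 2 = 1) (h3 : a + 1 < k)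
    (a' b' : ℕ) (ha' : a' < k) (hb' : b' < 2) (h2' : a' % 2 = 1) (h3' : a' + 1 < k)
    (hne : ¬(a = a' ∧ b = b'))
    (heq : (Lad k).neighborSet (⟨a, ha⟩, ⟨b, hb⟩) ∩ (SB k \ {(⟨c, hc⟩, ⟨d, hd⟩)}) =
      (Lad k).neighborSet (⟨a', ha'⟩, ⟨b', hb'⟩) ∩ (SB k \ {(⟨c, hc⟩, ⟨d, hd⟩)})) : False := by
  have trans : ∀ x, x ∈ (Lad k).neighborSet (⟨a, ha⟩, ⟨b, hb⟩) ∩ SB k →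
      x ≠ (⟨c, hc⟩, ⟨d, hd⟩) → x ∈ (Lad k).neighborSet (⟨a', ha'⟩, ⟨b', hb'⟩) ∩ SB k := by
    intro x hx hxv
    have hx2 : x ∈ (Lad k).neighborSet (⟨a, ha⟩, ⟨b, hb⟩) ∩
        (SB k \ {(⟨c, hc⟩, ⟨d, hd⟩)}) := ⟨hx.1, hx.2, hxv⟩
    rw [heq] at hx2; exact ⟨hx2.1, hx2.2.1⟩
  have trans' : ∀ x, x ∈ (Lad k).neighborSet (⟨a', ha'⟩, ⟨b', hb'⟩) ∩ SB k →
      x ≠ (⟨c, hc⟩, ⟨d, hd⟩) → x ∈ (Lad k).neighborSet (⟨a, ha⟩, ⟨b, hb⟩) ∩ SB k := by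
    intro x hx hxv
    have hx2 : x ∈ (Lad k).neighborSet (⟨a', ha'⟩, ⟨b', hb'⟩) ∩
        (SB k \ {(⟨c, hc⟩, ⟨d, hd⟩)}) := ⟨hx.1, hx.2, hxv⟩
    rw [← heq] at hx2; exact ⟨hx2.1, hx2.2.1⟩
  have F1 : ¬(a - 1 = c ∧ b = d) →
      ((a - 1 = a' - 1 ∧ b = b') ∨ (a - 1 = a' + 1 ∧ b = b')) := by
    intro h
    have := trans _ (mem_code_left a b ha hb h2 h3)
      (by simp only [Set.mem_singleton_iff, Ne, Prod.ext_iff, Fin.ext_iff, Fin.val_mk, true_and, and_true, false_and, and_false, true_or, or_true, false_or, or_false, not_true, not_false_iff]; omega)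
    rw [code_eq a' b' ha' hb' h2' h3'] at this
    simp only [Set.mem_insert_iff, Set.mem_singleton_iff, Prod.ext_iff, Fin.ext_iff,
      Fin.val_mk, true_and, and_true, false_and, and_false, true_or, or_true, false_or, or_false, not_true, not_false_iff] at this
    omega
  have F2 : ¬(a + 1 = c ∧ b = d) →
      ((a + 1 = a' - 1 ∧ b = b') ∨ (a + 1 = a' + 1 ∧ b = b')) := by
    intro h
    have := trans _ (mem_code_right a b ha hb h2 h3)
      (by simp only [Set.mem_singleton_iff, Ne, Prod.ext_iff, Fin.ext_iff, Fin.val_mk, true_and, and_true, false_and, and_false, true_or, or_true, false_or, or_false, not_true, not_false_iff]; omega)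
    rw [code_eq a' b' ha' hb' h2' h3'] at this
    simp only [Set.mem_insert_iff, Set.mem_singleton_iff, Prod.ext_iff, Fin.ext_iff,
      Fin.val_mk, true_and, and_true, false_and, and_false, true_or, or_true, false_or, or_false, not_true, not_false_iff] at this
    omega
  have F3 : ¬(a' - 1 = c ∧ b' = d) →
      ((a' - 1 = a - 1 ∧ b' = b) ∨ (a' - 1 = a + 1 ∧ b' = b)) := by
    intro h
    have := trans' _ (mem_code_left a' b' ha' hb' h2' h3')
      (by simp only [Set.mem_singleton_iff, Ne, Prod.ext_iff, Fin.ext_iff, Fin.val_mk, true_and, and_true, false_and, and_false, true_or, or_true, false_or, or_false, not_true, not_false_iff]; omega)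
    rw [code_eq a b ha hb h2 h3] at this
    simp only [Set.mem_insert_iff, Set.mem_singleton_iff, Prod.ext_iff, Fin.ext_iff,
      Fin.val_mk, true_and, and_true, false_and, and_false, true_or, or_true, false_or, or_false, not_true, not_false_iff] at this
    omega
  have F4 : ¬(a' + 1 = c ∧ b' = d) →
      ((a' + 1 = a - 1 ∧ b' = b) ∨ (a' + 1 = a + 1 ∧ b' = b)) := by
    intro h
    have := trans' _ (mem_code_right a' b' ha' hb' h2' h3')
      (by simp only [Set.mem_singleton_iff, Ne, Prod.ext_iff, Fin.ext_iff, Fin.val_mk, true_and, and_true, false_and, and_false, true_or, or_true, false_or, or_false, not_true, not_false_iff]; omega)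
    rw [code_eq a b ha hb h2 h3] at this
    simp only [Set.mem_insert_iff, Set.mem_singleton_iff, Prod.ext_iff, Fin.ext_iff,
      Fin.val_mk, true_and, and_true, false_and, and_false, true_or, or_true, false_or, or_false, not_true, not_false_iff] at this
    omega
  omega

lemma aux_iv (c d : ℕ) (hc : c < k) (hd : d < 2) (hv : ((⟨c, hc⟩, ⟨d, hd⟩) : LV k) ∈ SB k)
    (a b : ℕ) (ha : a < k) (hb : b < 2) (h2 : a % 2 = 1) (h3 : a + 1 < k)
    (heq : (Lad k).neighborSet (⟨a, ha⟩, ⟨b, hb⟩) ∩ (SB k \ {(⟨c, hc⟩, ⟨d, hd⟩)}) =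
      (Lad k).neighborSet (⟨c, hc⟩, ⟨d, hd⟩) ∩ (SB k \ {(⟨c, hc⟩, ⟨d, hd⟩)})) : False := by
  have t0 := SB_partner c d hc hd hv
  rw [← heq] at t0
  have t1 : ((⟨c, hc⟩ : Fin k), (⟨1 - d, by omega⟩ : Fin 2)) ∈
      (Lad k).neighborSet (⟨a, ha⟩, ⟨b, hb⟩) ∩ SB k := ⟨t0.1, t0.2.1⟩
  rw [code_eq a b ha hb h2 h3] at t1
  simp only [Set.mem_insert_iff, Set.mem_singleton_iff, Prod.ext_iff, Fin.ext_iff,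
    Fin.val_mk, true_and, and_true, false_and, and_false, true_or, or_true, false_or, or_false, not_true, not_false_iff] at t1
  have F1 : ¬(a - 1 = c ∧ b = d) →
      ((d = b ∧ (c + 1 = a - 1 ∨ (a - 1) + 1 = c)) ∨ (c = a - 1 ∧ d ≠ b)) := by
    intro h
    have hm := mem_code_left a b ha hb h2 h3
    have hx2 : ((⟨a - 1, by omega⟩ : Fin k), (⟨b, hb⟩ : Fin 2)) ∈
        (Lad k).neighborSet (⟨a, ha⟩, ⟨b, hb⟩) ∩ (SB k \ {(⟨c, hc⟩, ⟨d, hd⟩)}) :=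
      ⟨hm.1, hm.2, by simp only [Set.mem_singleton_iff, Ne, Prod.ext_iff, Fin.ext_iff, Fin.val_mk, true_and, and_true, false_and, and_false, true_or, or_true, false_or, or_false, not_true, not_false_iff]; omega⟩
    rw [heq] at hx2
    have := hx2.1
    rw [SimpleGraph.mem_neighborSet, lad_adj] at this
    first
    | (simp only [Fin.val_mk, true_and, and_true, false_and, and_false, true_or, or_true, false_or, or_false, not_true, not_false_iff] at this; omega)
    | omega
  have F2 : ¬(a + 1 = c ∧ b = d) →
      ((d = b ∧ (c + 1 = a + 1 ∨ (a + 1) + 1 = c)) ∨ (c = a + 1 ∧ d ≠ b)) := by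
    intro h
    have hm := mem_code_right a b ha hb h2 h3
    have hx2 : ((⟨a + 1, h3⟩ : Fin k), (⟨b, hb⟩ : Fin 2)) ∈
        (Lad k).neighborSet (⟨a, ha⟩, ⟨b, hb⟩) ∩ (SB k \ {(⟨c, hc⟩, ⟨d, hd⟩)}) :=
      ⟨hm.1, hm.2, by simp only [Set.mem_singleton_iff, Ne, Prod.ext_iff, Fin.ext_iff, Fin.val_mk, true_and, and_true, false_and, and_false, true_or, or_true, false_or, or_false, not_true, not_false_iff]; omega⟩
    rw [heq] at hx2
    have := hx2.1
    rw [SimpleGraph.mem_neighborSet, lad_adj] at this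
    first
    | (simp only [Fin.val_mk, true_and, and_true, false_and, and_false, true_or, or_true, false_or, or_false, not_true, not_false_iff] at this; omega)
    | omega
  omega

end Upper
lemma SB_RED : IsRedLDSet (Lad k) (SB k) := by
  refine ⟨SB_LD, ?_⟩
  rintro ⟨⟨c, hc⟩, ⟨d, hd⟩⟩ hv
  constructor
  · rintro ⟨⟨a, ha⟩, ⟨b, hb⟩⟩ hu
    rcases em (((⟨a, ha⟩, ⟨b, hb⟩) : LV k) ∈ SB k) with hus | hus
    · have huv : a = c ∧ b = d := by
        by_contra hne
        have hx : ((⟨a, ha⟩, ⟨b, hb⟩) : LV k) ∉ ({((⟨c, hc⟩, ⟨d, hd⟩) : LV k)} : Set (LV k)) := by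
          simp only [Set.mem_singleton_iff, Prod.ext_iff, Fin.ext_iff, Fin.val_mk]
          omega
        exact hu ⟨hus, hx⟩
      obtain ⟨rfl, rfl⟩ := huv
      exact ⟨_, SB_partner a b hc hd hus⟩
    · have hus2 := not_mem_SB.1 hus
      simp only [Fin.val_mk] at hus2
      have h3 : a + 1 < k := by omega
      rcases em ((((⟨a - 1, by omega⟩ : Fin k), (⟨b, hb⟩ : Fin 2)) : LV k)
          = ((⟨c, hc⟩, ⟨d, hd⟩) : LV k)) with he | he
      · refine ⟨_, (mem_code_right a b ha hb hus2.1 h3).1,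
          (mem_code_right a b ha hb hus2.1 h3).2, ?_⟩
        simp only [Prod.ext_iff, Fin.ext_iff, Fin.val_mk] at he
        simp only [Set.mem_singleton_iff, Prod.ext_iff, Fin.ext_iff, Fin.val_mk]
        omega
      · exact ⟨_, (mem_code_left a b ha hb hus2.1 h3).1,
          (mem_code_left a b ha hb hus2.1 h3).2, he⟩
  · rintro ⟨⟨a, ha⟩, ⟨b, hb⟩⟩ hu ⟨⟨a', ha'⟩, ⟨b', hb'⟩⟩ hu' hne heq
    have hne2 : ¬(a = a' ∧ b = b') := by
      simp only [Ne, Prod.ext_iff, Fin.ext_iff, Fin.val_mk] at hne; omega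
    rcases em (((⟨a, ha⟩, ⟨b, hb⟩) : LV k) ∈ SB k) with hus | hus
    · have huv : a = c ∧ b = d := by
        by_contra hne'
        have hx : ((⟨a, ha⟩, ⟨b, hb⟩) : LV k) ∉ ({((⟨c, hc⟩, ⟨d, hd⟩) : LV k)} : Set (LV k)) := by
          simp only [Set.mem_singleton_iff, Prod.ext_iff, Fin.ext_iff, Fin.val_mk]
          omega
        exact hu ⟨hus, hx⟩
      obtain ⟨rfl, rfl⟩ := huv
      rcases em (((⟨a', ha'⟩, ⟨b', hb'⟩) : LV k) ∈ SB k) with hus' | hus'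
      · have huv' : a' = a ∧ b' = b := by
          by_contra hne'
          have hx : ((⟨a', ha'⟩, ⟨b', hb'⟩) : LV k) ∉ ({((⟨a, hc⟩, ⟨b, hd⟩) : LV k)} : Set (LV k)) := by
            simp only [Set.mem_singleton_iff, Prod.ext_iff, Fin.ext_iff, Fin.val_mk]
            omega
          exact hu' ⟨hus', hx⟩
        omega
      · have hus2' := not_mem_SB.1 hus'
        simp only [Fin.val_mk] at hus2'
        exact aux_iv a b hc hd hv a' b' ha' hb' hus2'.1 (by omega) heq.symm
    · have hus2 := not_mem_SB.1 hus
      simp only [Fin.val_mk] at hus2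
      rcases em (((⟨a', ha'⟩, ⟨b', hb'⟩) : LV k) ∈ SB k) with hus' | hus'
      · have huv' : a' = c ∧ b' = d := by
          by_contra hne'
          have hx : ((⟨a', ha'⟩, ⟨b', hb'⟩) : LV k) ∉ ({((⟨c, hc⟩, ⟨d, hd⟩) : LV k)} : Set (LV k)) := by
            simp only [Set.mem_singleton_iff, Prod.ext_iff, Fin.ext_iff, Fin.val_mk]
            omega
          exact hu' ⟨hus', hx⟩
        obtain ⟨rfl, rfl⟩ := huv'
        exact aux_iv a' b' hc hd hv a b ha hb hus2.1 (by omega) heq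
      · have hus2' := not_mem_SB.1 hus'
        simp only [Fin.val_mk] at hus2'
        exact aux_iii c d hc hd a b ha hb hus2.1 (by omega) a' b' ha' hb' hus2'.1 (by omega)
          hne2 heq
lemma evens_card (m : ℕ) :
    ((Finset.range m).filter (fun n => n % 2 = 0)).card = (m + 1) / 2 := by
  induction m with
  | zero => simp
  | succ m ih =>
    rw [Finset.range_add_one, Finset.filter_insert]
    by_cases h : m % 2 = 0
    · rw [if_pos h, Finset.card_insert_of_notMem (by simp)]
      omega
    · rw [if_neg h]
      omega

lemma count_cols (hk : 1 ≤ k) :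
    ((Finset.range k).filter (fun n => n % 2 = 0 ∨ n + 1 = k)).card =
      if Odd k then (k + 1) / 2 else k / 2 + 1 := by
  rcases Nat.even_or_odd k with he | ho
  · have he2 : k % 2 = 0 := Nat.even_iff.1 he
    rw [if_neg (by simp [Nat.odd_iff, he2])]
    have hins : (Finset.range k).filter (fun n => n % 2 = 0 ∨ n + 1 = k) =
        insert (k - 1) ((Finset.range k).filter (fun n => n % 2 = 0)) := by
      ext n
      simp only [Finset.mem_insert, Finset.mem_filter, Finset.mem_range]
      omega
    rw [hins, Finset.card_insert_of_notMem
      (by simp only [Finset.mem_filter, Finset.mem_range]; omega), evens_card]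
    omega
  · have ho2 : k % 2 = 1 := Nat.odd_iff.1 ho
    rw [if_pos ho]
    have hcg : (Finset.range k).filter (fun n => n % 2 = 0 ∨ n + 1 = k) =
        (Finset.range k).filter (fun n => n % 2 = 0) := by
      apply Finset.filter_congr
      intro n hn
      simp only [Finset.mem_range] at hn
      constructor <;> intro h <;> omega
    rw [hcg, evens_card]

lemma SB_ncard (hk : 1 ≤ k) : (SB k).ncard = if Odd k then k + 1 else k + 2 := by
  have hrep : SB k =
      ↑(Finset.univ.filter (fun p : LV k => (p.1 : ℕ) % 2 = 0 ∨ (p.1 : ℕ) + 1 = k)) := by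
    ext p
    simp [SB]
  rw [hrep, Set.ncard_coe_finset]
  have h2 : Finset.univ.filter (fun p : LV k => (p.1 : ℕ) % 2 = 0 ∨ (p.1 : ℕ) + 1 = k)
      = (Finset.univ.filter (fun i : Fin k => (i : ℕ) % 2 = 0 ∨ (i : ℕ) + 1 = k)) ×ˢ
        (Finset.univ : Finset (Fin 2)) := by
    ext p
    simp [Finset.mem_product]
  rw [h2, Finset.card_product]
  have h3 : (Finset.univ.filter (fun i : Fin k => (i : ℕ) % 2 = 0 ∨ (i : ℕ) + 1 = k)).card
      = ((Finset.range k).filter (fun n => n % 2 = 0 ∨ n + 1 = k)).card := by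
    refine Finset.card_nbij (fun i => (i : ℕ)) ?_ ?_ ?_
    · intro i hi
      simp only [Finset.mem_coe, Finset.mem_filter, Finset.mem_univ, true_and] at hi
      simp only [Finset.mem_coe, Finset.mem_filter, Finset.mem_range]
      exact ⟨i.isLt, hi⟩
    · intro i _ j _ h
      exact Fin.val_injective h
    · intro n hn
      simp only [Finset.mem_coe, Finset.mem_filter, Finset.mem_range] at hn
      exact ⟨⟨n, hn.1⟩, by simp [hn.2], rfl⟩
  rw [h3, count_cols hk]
  have := Nat.odd_iff (n := k)
  rcases Nat.even_or_odd k with he | ho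
  · rw [if_neg (by simp [Nat.odd_iff, Nat.even_iff.1 he]), if_neg (by simp [Nat.odd_iff, Nat.even_iff.1 he])]
    have := Nat.even_iff.1 he
    simp only [Finset.card_univ, Fintype.card_fin]
    omega
  · rw [if_pos ho, if_pos ho]
    have := Nat.odd_iff.1 ho
    simp only [Finset.card_univ, Fintype.card_fin]
    omega
section Lower
variable {k : ℕ} {S : Set (LV k)}

def Sp (S : Set (LV k)) (a b : ℕ) : Prop :=
  ∃ (ha : a < k) (hb : b < 2), ((⟨a, ha⟩, ⟨b, hb⟩) : LV k) ∈ S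

lemma sp_coords {x : LV k} (hxS : x ∈ S) : Sp S (x.1 : ℕ) (x.2 : ℕ) :=
  ⟨x.1.isLt, x.2.isLt, hxS⟩

lemma sp_ne {a0 b0 : ℕ} (hn : ¬ Sp S a0 b0) {x : LV k} (hsp : Sp S (x.1 : ℕ) (x.2 : ℕ)) :
    ¬((x.1 : ℕ) = a0 ∧ (x.2 : ℕ) = b0) := by
  rintro ⟨h1, h2⟩
  exact hn (h1 ▸ h2 ▸ hsp)

lemma red_two (hS : IsRedLDSet (Lad k) S) {u : LV k} (hu : u ∉ S) (w : LV k)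
    (hsub : (Lad k).neighborSet u ∩ S ⊆ {w}) : False := by
  obtain ⟨x, hx⟩ := hS.1.1 u hu
  have hxw : x = w := hsub hx
  subst hxw
  obtain ⟨y, hy⟩ := (hS.2 x hx.2).1 u (fun hc => hu hc.1)
  exact hy.2.2 (hsub ⟨hy.1, hy.2.1⟩)

lemma red_dom_self (hS : IsRedLDSet (Lad k) S) {v : LV k} (hv : v ∈ S) :
    ((Lad k).neighborSet v ∩ (S \ {v})).Nonempty :=
  (hS.2 v hv).1 v (fun hc => hc.2 rfl)

lemma red_pair (hS : IsRedLDSet (Lad k) S) {v u : LV k} (hv : v ∈ S) (hu : u ∉ S)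
    (heq : (Lad k).neighborSet u ∩ (S \ {v}) = (Lad k).neighborSet v ∩ (S \ {v})) : False :=
  (hS.2 v hv).2 u (fun hc => hu hc.1) v (fun hc => hc.2 rfl) (fun he => hu (he ▸ hv)) heq

lemma H1 (hS : IsRedLDSet (Lad k) S) (a b : ℕ) (ha : a < k) (hb : b < 2)
    (h0 : ¬ Sp S a b) (h1 : ¬ Sp S a (1 - b)) :
    1 ≤ a ∧ a + 1 < k ∧ Sp S (a - 1) b ∧ Sp S (a + 1) b := by
  have huS : ((⟨a, ha⟩, ⟨b, hb⟩) : LV k) ∉ S := fun h => h0 ⟨ha, hb, h⟩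
  have key : ∀ x : LV k, x ∈ (Lad k).neighborSet (⟨a, ha⟩, ⟨b, hb⟩) ∩ S →
      ((x.2 : ℕ) = b ∧ ((x.1 : ℕ) + 1 = a ∨ (x.1 : ℕ) = a + 1)) := by
    intro x hx
    have hadj := hx.1
    rw [SimpleGraph.mem_neighborSet, lad_adj] at hadj
    have hsp := sp_coords hx.2
    have e2 := sp_ne h1 hsp
    have e0 := sp_ne h0 hsp
    simp only [Fin.val_mk] at hadj
    omega
  have step1 : a + 1 < k := by
    by_contra hak
    refine red_two hS huS ((⟨a - 1, by omega⟩ : Fin k), (⟨b, hb⟩ : Fin 2)) ?_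
    intro x hx
    have hk2 := key x hx
    have hxlt := x.1.isLt
    simp only [Set.mem_singleton_iff, Prod.ext_iff, Fin.ext_iff, Fin.val_mk]
    omega
  have step2 : Sp S (a + 1) b := by
    by_contra hnn
    refine red_two hS huS ((⟨a - 1, by omega⟩ : Fin k), (⟨b, hb⟩ : Fin 2)) ?_
    intro x hx
    have hk2 := key x hx
    have e3 := sp_ne hnn (sp_coords hx.2)
    simp only [Set.mem_singleton_iff, Prod.ext_iff, Fin.ext_iff, Fin.val_mk]
    omega
  have step3 : 1 ≤ a := by
    by_contra h
    refine red_two hS huS ((⟨a + 1, step1⟩ : Fin k), (⟨b, hb⟩ : Fin 2)) ?_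
    intro x hx
    have hk2 := key x hx
    simp only [Set.mem_singleton_iff, Prod.ext_iff, Fin.ext_iff, Fin.val_mk]
    omega
  have step4 : Sp S (a - 1) b := by
    by_contra hnn
    refine red_two hS huS ((⟨a + 1, step1⟩ : Fin k), (⟨b, hb⟩ : Fin 2)) ?_
    intro x hx
    have hk2 := key x hx
    have e3 := sp_ne hnn (sp_coords hx.2)
    simp only [Set.mem_singleton_iff, Prod.ext_iff, Fin.ext_iff, Fin.val_mk]
    omega
  exact ⟨step3, step1, step4, step2⟩

end Lower
section Lower2
variable {k : ℕ} {S : Set (LV k)}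

lemma lemE (hS : IsRedLDSet (Lad k) S) (r : ℕ) (hr : r < 2)
    (h1 : Sp S 0 r) (h2 : ¬ Sp S 0 (1 - r)) :
    Sp S 1 r ∧ Sp S 1 (1 - r) ∧ Sp S 2 r := by
  obtain ⟨h0k, hr2, hvS⟩ := h1
  have huS : ((⟨0, h0k⟩, ⟨1 - r, by omega⟩) : LV k) ∉ S := fun h => h2 ⟨h0k, by omega, h⟩
  have key : ∀ x : LV k, x ∈ (Lad k).neighborSet ((⟨0, h0k⟩, ⟨1 - r, by omega⟩) : LV k) ∩ S →
      (((x.1 : ℕ) = 0 ∧ (x.2 : ℕ) = r) ∨ ((x.1 : ℕ) = 1 ∧ (x.2 : ℕ) = 1 - r)) := by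
    intro x hx
    have hadj := hx.1
    rw [SimpleGraph.mem_neighborSet, lad_adj] at hadj
    simp only [Fin.val_mk] at hadj
    omega
  have step1 : Sp S 1 (1 - r) := by
    by_contra hnn
    refine red_two hS huS ((⟨0, h0k⟩, ⟨r, hr2⟩) : LV k) ?_
    intro x hx
    have hk2 := key x hx
    have e3 := sp_ne hnn (sp_coords hx.2)
    simp only [Set.mem_singleton_iff, Prod.ext_iff, Fin.ext_iff, Fin.val_mk]
    omega
  have step2 : Sp S 1 r := by
    obtain ⟨y, hy⟩ := red_dom_self hS hvS
    have hadj := hy.1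
    rw [SimpleGraph.mem_neighborSet, lad_adj] at hadj
    simp only [Fin.val_mk] at hadj
    have e2 := sp_ne h2 (sp_coords hy.2.1)
    have hyv : ¬((y.1 : ℕ) = 0 ∧ (y.2 : ℕ) = r) := by
      intro hc
      apply hy.2.2
      simp only [Set.mem_singleton_iff, Prod.ext_iff, Fin.ext_iff, Fin.val_mk]
      omega
    have hco : (y.1 : ℕ) = 1 ∧ (y.2 : ℕ) = r := by omega
    have hsp := sp_coords hy.2.1
    rw [hco.1, hco.2] at hsp
    exact hsp
  have step3 : Sp S 2 r := by
    by_contra hnn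
    obtain ⟨h1k, _, hv'S⟩ := step2
    refine red_pair hS (v := ((⟨1, h1k⟩, ⟨r, hr2⟩) : LV k)) hv'S huS ?_
    ext x
    constructor
    · rintro ⟨hadj, hxS, hxv⟩
      rw [SimpleGraph.mem_neighborSet, lad_adj] at hadj
      simp only [Fin.val_mk] at hadj
      refine ⟨?_, hxS, hxv⟩
      rw [SimpleGraph.mem_neighborSet, lad_adj]
      simp only [Fin.val_mk]
      omega
    · rintro ⟨hadj, hxS, hxv⟩
      rw [SimpleGraph.mem_neighborSet, lad_adj] at hadj
      simp only [Fin.val_mk] at hadj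
      have e3 := sp_ne hnn (sp_coords hxS)
      refine ⟨?_, hxS, hxv⟩
      rw [SimpleGraph.mem_neighborSet, lad_adj]
      simp only [Fin.val_mk]
      omega
  exact ⟨step2, step1, step3⟩

lemma lemE' (hS : IsRedLDSet (Lad k) S) (r : ℕ) (hr : r < 2) (hk : 1 ≤ k)
    (h1 : Sp S (k - 1) r) (h2 : ¬ Sp S (k - 1) (1 - r)) :
    3 ≤ k ∧ Sp S (k - 2) r ∧ Sp S (k - 2) (1 - r) ∧ Sp S (k - 3) r := by
  obtain ⟨hak, hr2, hvS⟩ := h1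
  have huS : ((⟨k - 1, hak⟩, ⟨1 - r, by omega⟩) : LV k) ∉ S := fun h => h2 ⟨hak, by omega, h⟩
  have key : ∀ x : LV k,
      x ∈ (Lad k).neighborSet ((⟨k - 1, hak⟩, ⟨1 - r, by omega⟩) : LV k) ∩ S →
      (((x.1 : ℕ) = k - 1 ∧ (x.2 : ℕ) = r) ∨ ((x.1 : ℕ) + 1 = k - 1 ∧ (x.2 : ℕ) = 1 - r)) := by
    intro x hx
    have hadj := hx.1
    rw [SimpleGraph.mem_neighborSet, lad_adj] at hadj
    simp only [Fin.val_mk] at hadj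
    omega
  have step1 : Sp S (k - 2) (1 - r) := by
    by_contra hnn
    refine red_two hS huS ((⟨k - 1, hak⟩, ⟨r, hr2⟩) : LV k) ?_
    intro x hx
    have hk2 := key x hx
    have e3 := sp_ne hnn (sp_coords hx.2)
    simp only [Set.mem_singleton_iff, Prod.ext_iff, Fin.ext_iff, Fin.val_mk]
    omega
  have step2 : Sp S (k - 2) r ∧ 2 ≤ k := by
    obtain ⟨y, hy⟩ := red_dom_self hS hvS
    have hadj := hy.1
    rw [SimpleGraph.mem_neighborSet, lad_adj] at hadj
    simp only [Fin.val_mk] at hadj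
    have e2 := sp_ne h2 (sp_coords hy.2.1)
    have hyv : ¬((y.1 : ℕ) = k - 1 ∧ (y.2 : ℕ) = r) := by
      intro hc
      apply hy.2.2
      simp only [Set.mem_singleton_iff, Prod.ext_iff, Fin.ext_iff, Fin.val_mk]
      omega
    have hco : (y.1 : ℕ) = k - 2 ∧ (y.2 : ℕ) = r ∧ 2 ≤ k := by omega
    have hsp := sp_coords hy.2.1
    rw [hco.1, hco.2.1] at hsp
    exact ⟨hsp, hco.2.2⟩
  obtain ⟨hk2S, hk2⟩ := step2
  obtain ⟨hbk, hrr2, hv'S⟩ := hk2S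
  have hk3 : 3 ≤ k := by
    by_contra hk3
    refine red_pair hS (v := ((⟨k - 2, hbk⟩, ⟨r, hr2⟩) : LV k)) hv'S huS ?_
    ext x
    constructor
    · rintro ⟨hadj, hxS, hxv⟩
      rw [SimpleGraph.mem_neighborSet, lad_adj] at hadj
      simp only [Fin.val_mk] at hadj
      refine ⟨?_, hxS, hxv⟩
      rw [SimpleGraph.mem_neighborSet, lad_adj]
      simp only [Fin.val_mk]
      omega
    · rintro ⟨hadj, hxS, hxv⟩
      rw [SimpleGraph.mem_neighborSet, lad_adj] at hadj
      simp only [Fin.val_mk] at hadj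
      refine ⟨?_, hxS, hxv⟩
      rw [SimpleGraph.mem_neighborSet, lad_adj]
      simp only [Fin.val_mk]
      omega
  have step3 : Sp S (k - 3) r := by
    by_contra hnn
    refine red_pair hS (v := ((⟨k - 2, hbk⟩, ⟨r, hr2⟩) : LV k)) hv'S huS ?_
    ext x
    constructor
    · rintro ⟨hadj, hxS, hxv⟩
      rw [SimpleGraph.mem_neighborSet, lad_adj] at hadj
      simp only [Fin.val_mk] at hadj
      refine ⟨?_, hxS, hxv⟩
      rw [SimpleGraph.mem_neighborSet, lad_adj]
      simp only [Fin.val_mk]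
      omega
    · rintro ⟨hadj, hxS, hxv⟩
      rw [SimpleGraph.mem_neighborSet, lad_adj] at hadj
      simp only [Fin.val_mk] at hadj
      have e3 := sp_ne hnn (sp_coords hxS)
      refine ⟨?_, hxS, hxv⟩
      rw [SimpleGraph.mem_neighborSet, lad_adj]
      simp only [Fin.val_mk]
      omega
  exact ⟨hk3, ⟨hbk, hrr2, hv'S⟩, step1, step3⟩

end Lower2
section Lower3
variable {k : ℕ} {S : Set (LV k)}

lemma cnt1 (T : Finset (LV k)) (hmem : ∀ p : LV k, p ∈ T ↔ p ∈ S) (i b : ℕ)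
    (h : Sp S i b) : 1 ≤ (T.filter fun p => (p.1 : ℕ) = i).card := by
  obtain ⟨hik, hb2, hm⟩ := h
  exact Finset.card_pos.2 ⟨(⟨i, hik⟩, ⟨b, hb2⟩), Finset.mem_filter.2 ⟨(hmem _).2 hm, rfl⟩⟩

lemma cnt2 (T : Finset (LV k)) (hmem : ∀ p : LV k, p ∈ T ↔ p ∈ S) (i : ℕ)
    (h0 : Sp S i 0) (h1 : Sp S i 1) : 2 ≤ (T.filter fun p => (p.1 : ℕ) = i).card := by
  obtain ⟨hik, hb0, hm0⟩ := h0
  obtain ⟨hik', hb1, hm1⟩ := h1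
  have h2 : 1 < (T.filter fun p => (p.1 : ℕ) = i).card := by
    refine Finset.one_lt_card.2 ⟨(⟨i, hik⟩, ⟨0, hb0⟩), Finset.mem_filter.2 ⟨(hmem _).2 hm0, rfl⟩,
      (⟨i, hik'⟩, ⟨1, hb1⟩), Finset.mem_filter.2 ⟨(hmem _).2 hm1, rfl⟩, ?_⟩
    simp only [Ne, Prod.ext_iff, Fin.ext_iff, Fin.val_mk]
    omega
  omega

lemma cnt_one (T : Finset (LV k)) (hmem : ∀ p : LV k, p ∈ T ↔ p ∈ S) (i : ℕ)
    (h : (T.filter fun p => (p.1 : ℕ) = i).card = 1) :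
    ∃ b < 2, Sp S i b ∧ ¬ Sp S i (1 - b) := by
  obtain ⟨p, hp⟩ := Finset.card_eq_one.1 h
  have hpm : p ∈ T.filter fun p => (p.1 : ℕ) = i := by rw [hp]; exact Finset.mem_singleton_self p
  obtain ⟨hpT, hpi⟩ := Finset.mem_filter.1 hpm
  refine ⟨(p.2 : ℕ), p.2.isLt, ?_, ?_⟩
  · have := sp_coords ((hmem p).1 hpT)
    rwa [hpi] at this
  · rintro ⟨h1, h2, hm⟩
    have hq : ((⟨i, h1⟩, ⟨1 - (p.2 : ℕ), h2⟩) : LV k) ∈ T.filter fun p => (p.1 : ℕ) = i :=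
      Finset.mem_filter.2 ⟨(hmem _).2 hm, rfl⟩
    rw [hp, Finset.mem_singleton] at hq
    have hc := congrArg (fun q : LV k => (q.2 : ℕ)) hq
    simp only [Fin.val_mk] at hc
    have := p.2.isLt
    omega

lemma sum_card (T : Finset (LV k)) :
    T.card = ∑ i ∈ Finset.range k, (T.filter fun p => (p.1 : ℕ) = i).card :=
  Finset.card_eq_sum_card_fiberwise (fun x _ => Finset.mem_range.2 x.1.isLt)

lemma pairs_sum (k : ℕ) (t : ℕ → ℕ) (pb : ∀ i, i + 1 < k → 2 ≤ t i + t (i + 1)) :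
    ∀ m a, a + 2 * m ≤ k → 2 * m ≤ ∑ j ∈ Finset.range (2 * m), t (a + j) := by
  intro m
  induction m with
  | zero => simp
  | succ m ih =>
    intro a hak
    rw [show 2 * (m + 1) = 2 * m + 1 + 1 from by omega, Finset.sum_range_succ,
      Finset.sum_range_succ]
    have hih := ih a (by omega)
    have hpb := pb (a + 2 * m) (by omega)
    rw [show a + (2 * m + 1) = a + 2 * m + 1 from by omega]
    omega

end Lower3
lemma lower_bound {k : ℕ} {S : Set (LV k)} (hS : IsRedLDSet (Lad k) S) (hk : 1 ≤ k) :
    (if Odd k then k + 1 else k + 2) ≤ S.ncard := by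
  classical
  have hfin : S.Finite := Set.toFinite S
  have hmem : ∀ p : LV k, p ∈ hfin.toFinset ↔ p ∈ S := fun p => hfin.mem_toFinset
  have hcard : S.ncard = hfin.toFinset.card := Set.ncard_eq_toFinset_card S hfin
  set T := hfin.toFinset with hT
  set t : ℕ → ℕ := fun i => (T.filter fun p => (p.1 : ℕ) = i).card with ht
  have hsum : T.card = ∑ i ∈ Finset.range k, t i := sum_card T
  have fact_pos : ∀ i b, Sp S i b → 1 ≤ t i := fun i b h => cnt1 T hmem i b h
  have fact_two : ∀ i, Sp S i 0 → Sp S i 1 → 2 ≤ t i := fun i h0 h1 => cnt2 T hmem i h0 h1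
  have fact_one : ∀ i, t i = 1 → ∃ b < 2, Sp S i b ∧ ¬ Sp S i (1 - b) :=
    fun i h => cnt_one T hmem i h
  have h0pos : 1 ≤ t 0 := by
    rcases Nat.eq_zero_or_pos (t 0) with h | h
    · exfalso
      have n0 : ¬ Sp S 0 0 := fun hsp => by have := fact_pos 0 0 hsp; omega
      have n1 : ¬ Sp S 0 1 := fun hsp => by have := fact_pos 0 1 hsp; omega
      obtain ⟨h1a, -, -, -⟩ := H1 hS 0 0 (by omega) (by omega) n0 n1
      omega
    · exact h
  have hkpos : 1 ≤ t (k - 1) := by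
    rcases Nat.eq_zero_or_pos (t (k - 1)) with h | h
    · exfalso
      have n0 : ¬ Sp S (k - 1) 0 := fun hsp => by have := fact_pos (k - 1) 0 hsp; omega
      have n1 : ¬ Sp S (k - 1) 1 := fun hsp => by have := fact_pos (k - 1) 1 hsp; omega
      obtain ⟨-, h2a, -, -⟩ := H1 hS (k - 1) 0 (by omega) (by omega) n0 n1
      omega
    · exact h
  have pairs : ∀ i, i + 1 < k → 2 ≤ t i + t (i + 1) := by
    intro i hi
    rcases Nat.eq_zero_or_pos (t i) with h0 | h0
    · have n0 : ¬ Sp S i 0 := fun hsp => by have := fact_pos i 0 hsp; omega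
      have n1 : ¬ Sp S i 1 := fun hsp => by have := fact_pos i 1 hsp; omega
      obtain ⟨-, -, -, hs0⟩ := H1 hS i 0 (by omega) (by omega) n0 n1
      obtain ⟨-, -, -, hs1⟩ := H1 hS i 1 (by omega) (by omega) n1 n0
      have := fact_two (i + 1) hs0 hs1
      omega
    rcases Nat.eq_zero_or_pos (t (i + 1)) with h1 | h1
    · have n0 : ¬ Sp S (i + 1) 0 := fun hsp => by have := fact_pos (i + 1) 0 hsp; omega
      have n1 : ¬ Sp S (i + 1) 1 := fun hsp => by have := fact_pos (i + 1) 1 hsp; omega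
      obtain ⟨-, -, hs0, -⟩ := H1 hS (i + 1) 0 (by omega) (by omega) n0 n1
      obtain ⟨-, -, hs1, -⟩ := H1 hS (i + 1) 1 (by omega) (by omega) n1 n0
      have := fact_two i hs0 hs1
      omega
    · omega
  have EL : t 0 = 1 → 3 ≤ k ∧ 2 ≤ t 1 ∧ 1 ≤ t 2 := by
    intro h
    obtain ⟨b, hb, hsp, hnsp⟩ := fact_one 0 h
    obtain ⟨s1, s2, s3⟩ := lemE hS b hb hsp hnsp
    have hk3 : 3 ≤ k := by obtain ⟨hlt, -, -⟩ := s3; omega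
    have h1two : 2 ≤ t 1 := by
      rcases (by omega : b = 0 ∨ b = 1) with rfl | rfl
      · exact fact_two 1 s1 s2
      · exact fact_two 1 s2 s1
    exact ⟨hk3, h1two, fact_pos 2 b s3⟩
  have EL' : t (k - 1) = 1 → 3 ≤ k ∧ 2 ≤ t (k - 2) ∧ 1 ≤ t (k - 3) := by
    intro h
    obtain ⟨b, hb, hsp, hnsp⟩ := fact_one (k - 1) h
    obtain ⟨hk3, s1, s2, s3⟩ := lemE' hS b hb hk hsp hnsp
    have h1two : 2 ≤ t (k - 2) := by
      rcases (by omega : b = 0 ∨ b = 1) with rfl | rfl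
      · exact fact_two (k - 2) s1 s2
      · exact fact_two (k - 2) s2 s1
    exact ⟨hk3, h1two, fact_pos (k - 3) b s3⟩
  have hF3 : 3 ≤ k → 4 ≤ t 0 + t 1 + t 2 := by
    intro hk3
    rcases (by omega : t 0 = 0 ∨ t 0 = 1 ∨ 2 ≤ t 0) with h | h | h
    · omega
    · obtain ⟨-, h1, h2⟩ := EL h; omega
    · have hp := pairs 1 (by omega)
      have hix : t (1 + 1) = t 2 := by norm_num
      omega
  have hL3 : 3 ≤ k → 4 ≤ t (k - 3) + t (k - 2) + t (k - 1) := by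
    intro hk3
    rcases (by omega : t (k - 1) = 0 ∨ t (k - 1) = 1 ∨ 2 ≤ t (k - 1)) with h | h | h
    · omega
    · obtain ⟨-, h1, h2⟩ := EL' h; omega
    · have hp := pairs (k - 3) (by omega)
      have hix : t (k - 3 + 1) = t (k - 2) := by rw [show k - 3 + 1 = k - 2 from by omega]
      omega
  rw [hcard, hsum]
  rcases (by omega : k = 1 ∨ k = 2 ∨ 3 ≤ k) with rfl | rfl | hk3
  · rw [if_pos (by decide)]
    simp only [Finset.sum_range_one]
    rcases (by omega : t 0 = 1 ∨ 2 ≤ t 0) with h | h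
    · obtain ⟨h3, -, -⟩ := EL h; omega
    · omega
  · rw [if_neg (by decide)]
    rw [Finset.sum_range_succ, Finset.sum_range_one]
    have e1 : t (2 - 1) = t 1 := by norm_num
    rcases (by omega : t 0 = 1 ∨ 2 ≤ t 0) with h | h
    · obtain ⟨h3, -, -⟩ := EL h; omega
    rcases (by omega : t 1 = 1 ∨ 2 ≤ t 1) with h' | h'
    · obtain ⟨h3, -, -⟩ := EL' (by omega); omega
    · omega
  · have hsplit : ∑ i ∈ Finset.range k, t i =
        (t 0 + t 1 + t 2) + ∑ j ∈ Finset.range (k - 3), t (3 + j) := by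
      have h1 := Finset.sum_range_add t 3 (k - 3)
      rw [show 3 + (k - 3) = k from by omega] at h1
      rw [h1, Finset.sum_range_succ, Finset.sum_range_succ, Finset.sum_range_one]
    rcases Nat.even_or_odd k with he | ho
    · rw [if_neg (by simp [Nat.odd_iff, Nat.even_iff.1 he])]
      have hke := Nat.even_iff.1 he
      rcases (by omega : k = 4 ∨ 6 ≤ k) with rfl | h6
      · rw [Finset.sum_range_succ, Finset.sum_range_succ, Finset.sum_range_succ,
          Finset.sum_range_one]
        have e1 : t (4 - 1) = t 3 := by norm_num
        have e2 : t (4 - 2) = t 2 := by norm_num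
        have e3 : t (4 - 3) = t 1 := by norm_num
        rcases (by omega : t 3 = 1 ∨ 2 ≤ t 3) with h | h
        · obtain ⟨-, ha, hb⟩ := EL' (by omega)
          rcases (by omega : t 0 = 1 ∨ 2 ≤ t 0) with h' | h'
          · obtain ⟨-, ha', hb'⟩ := EL h'; omega
          · omega
        · have := hF3 (by omega); omega
      · have hsplit2 : ∑ j ∈ Finset.range (k - 3), t (3 + j) =
            ∑ j ∈ Finset.range (k - 6), t (3 + j) +
              (t (k - 3) + t (k - 2) + t (k - 1)) := by
          have h2 := Finset.sum_range_add (fun j => t (3 + j)) (k - 6) 3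
          rw [show k - 6 + 3 = k - 3 from by omega] at h2
          rw [h2, Finset.sum_range_succ, Finset.sum_range_succ, Finset.sum_range_one]
          rw [show 3 + (k - 6 + 0) = k - 3 from by omega,
            show 3 + (k - 6 + 1) = k - 2 from by omega,
            show 3 + (k - 6 + 2) = k - 1 from by omega]
        have hmid := pairs_sum k t pairs ((k - 6) / 2) 3 (by omega)
        rw [show 2 * ((k - 6) / 2) = k - 6 from by omega] at hmid
        have := hF3 hk3
        have := hL3 hk3
        omega
    · rw [if_pos ho]
      have hko := Nat.odd_iff.1 ho
      have hmid := pairs_sum k t pairs ((k - 3) / 2) 3 (by omega)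
      rw [show 2 * ((k - 3) / 2) = k - 3 from by omega] at hmid
      have := hF3 hk3
      omega

end AuxStmt10

theorem stmt10 (k : ℕ) (hk : 1 ≤ k) :
    IsLeast {m : ℕ | ∃ S : Set (Fin k × Fin 2),
        IsRedLDSet ((SimpleGraph.pathGraph k).boxProd (SimpleGraph.pathGraph 2)) S ∧
          S.ncard = m}
      (if Odd k then k + 1 else k + 2) := by
  constructor
  · exact ⟨SB k, SB_RED, SB_ncard hk⟩
  · rintro m ⟨S, hRed, rfl⟩
    exact lower_bound hRed hk
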